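/- Let G be a finite group with property (P) that is not a 2-group, and let Q be a Sylow 3-subgroup of G. If the normalizer N = N_G(Q) contains no element of order 4, then N is the internal direct product N = Q × E, where E is an elementary abelian 2-subgroup of G (possibly trivial). In particular, if Q is non-abelian then N_G(Q) = Q × E with E elementary abelian of exponent dividing 2. -/

import Mathlib

set_option maxRecDepth 20000

/-- A finite group `G` has property (P) if it has even order and for all `x y : G`
with `x` of order 2, the subgroup generated by `x` and `y` is isomorphic to one of
`ℤ/2`, `ℤ/2 × ℤ/2`, `ℤ/4`, `ℤ/6`, `ℤ/2 × ℤ/4`, `ℤ/2 × ℤ/6` or `A₄`. -/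
def PropertyP (G : Type*) [Group G] : Prop :=
  Even (Nat.card G) ∧
  ∀ x y : G, orderOf x = 2 →
    Nonempty (↥(Subgroup.closure {x, y}) ≃* Multiplicative (ZMod 2)) ∨
    Nonempty (↥(Subgroup.closure {x, y}) ≃*
      Multiplicative (ZMod 2) × Multiplicative (ZMod 2)) ∨
    Nonempty (↥(Subgroup.closure {x, y}) ≃* Multiplicative (ZMod 4)) ∨
    Nonempty (↥(Subgroup.closure {x, y}) ≃* Multiplicative (ZMod 6)) ∨
    Nonempty (↥(Subgroup.closure {x, y}) ≃*
      Multiplicative (ZMod 2) × Multiplicative (ZMod 4)) ∨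
    Nonempty (↥(Subgroup.closure {x, y}) ≃*
      Multiplicative (ZMod 2) × Multiplicative (ZMod 6)) ∨
    Nonempty (↥(Subgroup.closure {x, y}) ≃* alternatingGroup (Fin 4))

private lemma decA4_comm_sq : ∀ a b : alternatingGroup (Fin 4),
    a ^ 2 = 1 → b ^ 2 = 1 → a * b = b * a := by decide

private lemma decA4_S : ∀ a b : alternatingGroup (Fin 4),
    a ^ 2 = 1 → (b * (a * b * a)) ^ 3 = 1 → (b * (a * b⁻¹ * a)) ^ 3 = 1 →
    a * b = b * a := by decide

private lemma decA4_pow : ∀ a : alternatingGroup (Fin 4), a ^ 6 = 1 := by decide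
private lemma decZ2_pow : ∀ a : Multiplicative (ZMod 2), a ^ 4 = 1 := by decide
private lemma decV4_pow :
    ∀ a : Multiplicative (ZMod 2) × Multiplicative (ZMod 2), a ^ 4 = 1 := by decide
private lemma decZ4_pow : ∀ a : Multiplicative (ZMod 4), a ^ 4 = 1 := by decide
private lemma decZ6_pow : ∀ a : Multiplicative (ZMod 6), a ^ 6 = 1 := by decide
private lemma decZ24_pow :
    ∀ a : Multiplicative (ZMod 2) × Multiplicative (ZMod 4), a ^ 4 = 1 := by decide
private lemma decZ26_pow :
    ∀ a : Multiplicative (ZMod 2) × Multiplicative (ZMod 6), a ^ 6 = 1 := by decide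

section transfer

variable {G : Type*} [Group G] {H : Subgroup G} {K : Type*} [Group K]

private lemma mk_pow_eq_one {x : G} (hx : x ∈ H) {n : ℕ} (h : x ^ n = 1) :
    (⟨x, hx⟩ : H) ^ n = 1 :=
  Subtype.ext (by simpa using h)

private lemma pow_eq_one_of_iso (e : ↥H ≃* K) {x : G} (hx : x ∈ H) {n : ℕ}
    (h : ∀ a : K, a ^ n = 1) : x ^ n = 1 := by
  have h2 : ((⟨x, hx⟩ : H) ^ n) = (1 : H) := e.injective (by rw [map_pow, h, map_one])
  simpa using congrArg Subtype.val h2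

private lemma comm_of_iso (e : ↥H ≃* K) (hK : ∀ a b : K, a * b = b * a)
    {x y : G} (hx : x ∈ H) (hy : y ∈ H) : x * y = y * x := by
  have h2 : (⟨x, hx⟩ : H) * ⟨y, hy⟩ = ⟨y, hy⟩ * ⟨x, hx⟩ :=
    e.injective (by rw [map_mul, map_mul, hK])
  simpa using congrArg Subtype.val h2

private lemma comm_of_iso_sq (e : ↥H ≃* K)
    (hK : ∀ a b : K, a ^ 2 = 1 → b ^ 2 = 1 → a * b = b * a)
    {x y : G} (hx : x ∈ H) (hy : y ∈ H) (hx2 : x ^ 2 = 1) (hy2 : y ^ 2 = 1) :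
    x * y = y * x := by
  have ex2 : (e ⟨x, hx⟩) ^ 2 = 1 := by rw [← map_pow, mk_pow_eq_one hx hx2, map_one]
  have ey2 : (e ⟨y, hy⟩) ^ 2 = 1 := by rw [← map_pow, mk_pow_eq_one hy hy2, map_one]
  have h2 : (⟨x, hx⟩ : H) * ⟨y, hy⟩ = ⟨y, hy⟩ * ⟨x, hx⟩ :=
    e.injective (by rw [map_mul, map_mul, hK _ _ ex2 ey2])
  simpa using congrArg Subtype.val h2

end transfer

theorem stmt8 (G : Type*) [Group G] [Finite G] (hP : PropertyP G)
    (h2 : ¬ IsPGroup 2 G) (Q : Sylow 3 G) :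
    ((∀ x ∈ Subgroup.normalizer ((Q : Subgroup G) : Set G), orderOf x ≠ 4) →
      ∃ E : Subgroup G, (∀ x ∈ E, x ^ 2 = 1) ∧
        E ≤ Subgroup.normalizer ((Q : Subgroup G) : Set G) ∧ (Q : Subgroup G) ⊓ E = ⊥ ∧
        (∀ q ∈ (Q : Subgroup G), ∀ e ∈ E, q * e = e * q) ∧
        (Q : Subgroup G) ⊔ E = Subgroup.normalizer ((Q : Subgroup G) : Set G)) ∧
    ((¬ ∀ a b : ↥(Q : Subgroup G), a * b = b * a) →
      ∃ E : Subgroup G, (∀ x ∈ E, x ^ 2 = 1) ∧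
        E ≤ Subgroup.normalizer ((Q : Subgroup G) : Set G) ∧ (Q : Subgroup G) ⊓ E = ⊥ ∧
        (∀ q ∈ (Q : Subgroup G), ∀ e ∈ E, q * e = e * q) ∧
        (Q : Subgroup G) ⊔ E = Subgroup.normalizer ((Q : Subgroup G) : Set G)) := by
  classical
  obtain ⟨hEven, hXY⟩ := hP
  haveI fact2 : Fact (Nat.Prime 2) := ⟨Nat.prime_two⟩
  haveI fact3 : Fact (Nat.Prime 3) := ⟨by norm_num⟩
  set N : Subgroup G := Subgroup.normalizer ((Q : Subgroup G) : Set G) with hNdef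
  -- an involution exists
  obtain ⟨t0, ht0⟩ : ∃ t : G, orderOf t = 2 := by
    haveI := Fintype.ofFinite G
    exact exists_prime_orderOf_dvd_card 2
      (by rw [← Nat.card_eq_fintype_card]; exact hEven.two_dvd)
  -- every element has order dividing 4 or 6
  have hkey : ∀ g : G, g ^ 4 = 1 ∨ g ^ 6 = 1 := by
    intro g
    have hgH : g ∈ Subgroup.closure ({t0, g} : Set G) :=
      Subgroup.subset_closure (Set.mem_insert_of_mem _ rfl)
    rcases hXY t0 g ht0 with h | h | h | h | h | h | h
    · obtain ⟨e⟩ := h; exact Or.inl (pow_eq_one_of_iso e hgH decZ2_pow)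
    · obtain ⟨e⟩ := h; exact Or.inl (pow_eq_one_of_iso e hgH decV4_pow)
    · obtain ⟨e⟩ := h; exact Or.inl (pow_eq_one_of_iso e hgH decZ4_pow)
    · obtain ⟨e⟩ := h; exact Or.inr (pow_eq_one_of_iso e hgH decZ6_pow)
    · obtain ⟨e⟩ := h; exact Or.inl (pow_eq_one_of_iso e hgH decZ24_pow)
    · obtain ⟨e⟩ := h; exact Or.inr (pow_eq_one_of_iso e hgH decZ26_pow)
    · obtain ⟨e⟩ := h; exact Or.inr (pow_eq_one_of_iso e hgH decA4_pow)
  -- every element of Q has order dividing 3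
  have hQ3 : ∀ q ∈ (Q : Subgroup G), q ^ 3 = 1 := by
    intro q hq
    obtain ⟨k, hk⟩ := Q.2 ⟨q, hq⟩
    have hk' : q ^ 3 ^ k = 1 := by simpa using congrArg Subtype.val hk
    have hdv : orderOf q ∣ 3 ^ k := orderOf_dvd_of_pow_eq_one hk'
    rw [← orderOf_dvd_iff_pow_eq_one]
    rcases hkey q with h4 | h6
    · have hd4 : orderOf q ∣ 4 := orderOf_dvd_of_pow_eq_one h4
      have hco : Nat.Coprime (3 ^ k) 4 := Nat.Coprime.pow_left k (by norm_num)
      have : orderOf q ∣ 1 := hco ▸ Nat.dvd_gcd hdv hd4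
      exact (Nat.dvd_one.mp this) ▸ one_dvd 3
    · have hd6 : orderOf q ∣ 3 * 2 := orderOf_dvd_of_pow_eq_one (by norm_num at h6 ⊢; exact h6)
      have hco : Nat.Coprime (orderOf q) 2 :=
        Nat.Coprime.coprime_dvd_left hdv (Nat.Coprime.pow_left k (by norm_num))
      exact hco.dvd_of_dvd_mul_right hd6
  -- any two elements of square 1 commute
  have hB : ∀ x y : G, x ^ 2 = 1 → y ^ 2 = 1 → x * y = y * x := by
    intro x y hx2 hy2
    by_cases hx1 : x = 1
    · simp [hx1]
    have hordx : orderOf x = 2 := orderOf_eq_prime hx2 hx1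
    have hxH : x ∈ Subgroup.closure ({x, y} : Set G) :=
      Subgroup.subset_closure (Set.mem_insert _ _)
    have hyH : y ∈ Subgroup.closure ({x, y} : Set G) :=
      Subgroup.subset_closure (Set.mem_insert_of_mem _ rfl)
    rcases hXY x y hordx with h | h | h | h | h | h | h
    · obtain ⟨e⟩ := h; exact comm_of_iso e (fun a b => by exact mul_comm a b) hxH hyH
    · obtain ⟨e⟩ := h; exact comm_of_iso e (fun a b => by exact mul_comm a b) hxH hyH
    · obtain ⟨e⟩ := h; exact comm_of_iso e (fun a b => by exact mul_comm a b) hxH hyH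
    · obtain ⟨e⟩ := h; exact comm_of_iso e (fun a b => by exact mul_comm a b) hxH hyH
    · obtain ⟨e⟩ := h; exact comm_of_iso e (fun a b => by exact mul_comm a b) hxH hyH
    · obtain ⟨e⟩ := h; exact comm_of_iso e (fun a b => by exact mul_comm a b) hxH hyH
    · obtain ⟨e⟩ := h; exact comm_of_iso_sq e decA4_comm_sq hxH hyH hx2 hy2
  -- an involution in N commutes with every element of Q
  have hC : ∀ t ∈ N, t ^ 2 = 1 → ∀ q ∈ (Q : Subgroup G), t * q = q * t := by
    intro t htN ht2 q hq
    by_cases ht1 : t = 1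
    · simp [ht1]
    have hordt : orderOf t = 2 := orderOf_eq_prime ht2 ht1
    have htinv : t⁻¹ = t := inv_eq_of_mul_eq_one_left (by rw [← pow_two]; exact ht2)
    have hmem1 : t * q * t ∈ (Q : Subgroup G) := by
      have h := ((Subgroup.mem_normalizer_iff.mp htN) q).mp hq
      rwa [htinv] at h
    have hmem2 : t * q⁻¹ * t ∈ (Q : Subgroup G) := by
      have h := ((Subgroup.mem_normalizer_iff.mp htN) q⁻¹).mp (inv_mem hq)
      rwa [htinv] at h
    have hc1 : (q * (t * q * t)) ^ 3 = 1 := hQ3 _ (mul_mem hq hmem1)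
    have hc2 : (q * (t * q⁻¹ * t)) ^ 3 = 1 := hQ3 _ (mul_mem hq hmem2)
    have htH : t ∈ Subgroup.closure ({t, q} : Set G) :=
      Subgroup.subset_closure (Set.mem_insert _ _)
    have hqH : q ∈ Subgroup.closure ({t, q} : Set G) :=
      Subgroup.subset_closure (Set.mem_insert_of_mem _ rfl)
    rcases hXY t q hordt with h | h | h | h | h | h | h
    · obtain ⟨e⟩ := h; exact comm_of_iso e (fun a b => by exact mul_comm a b) htH hqH
    · obtain ⟨e⟩ := h; exact comm_of_iso e (fun a b => by exact mul_comm a b) htH hqH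
    · obtain ⟨e⟩ := h; exact comm_of_iso e (fun a b => by exact mul_comm a b) htH hqH
    · obtain ⟨e⟩ := h; exact comm_of_iso e (fun a b => by exact mul_comm a b) htH hqH
    · obtain ⟨e⟩ := h; exact comm_of_iso e (fun a b => by exact mul_comm a b) htH hqH
    · obtain ⟨e⟩ := h; exact comm_of_iso e (fun a b => by exact mul_comm a b) htH hqH
    · -- A4 case
      obtain ⟨e⟩ := h
      set H := Subgroup.closure ({t, q} : Set G) with hH
      set a := e ⟨t, htH⟩ with ha
      set b := e ⟨q, hqH⟩ with hb
      have ha2 : a ^ 2 = 1 := by rw [ha, ← map_pow, mk_pow_eq_one htH ht2, map_one]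
      have hX : ((⟨q, hqH⟩ : H) * (⟨t, htH⟩ * ⟨q, hqH⟩ * ⟨t, htH⟩)) ^ 3 = 1 :=
        Subtype.ext (by push_cast; simpa using hc1)
      have hY : ((⟨q, hqH⟩ : H) * (⟨t, htH⟩ * (⟨q, hqH⟩ : H)⁻¹ * ⟨t, htH⟩)) ^ 3 = 1 :=
        Subtype.ext (by push_cast; simpa using hc2)
      have h1 : (b * (a * b * a)) ^ 3 = 1 := by
        rw [ha, hb, ← map_mul, ← map_mul, ← map_mul, ← map_pow, hX, map_one]
      have h2' : (b * (a * b⁻¹ * a)) ^ 3 = 1 := by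
        rw [ha, hb, ← map_inv, ← map_mul, ← map_mul, ← map_mul, ← map_pow, hY, map_one]
      have := decA4_S a b ha2 h1 h2'
      have h3 : (⟨t, htH⟩ : H) * ⟨q, hqH⟩ = ⟨q, hqH⟩ * ⟨t, htH⟩ :=
        e.injective (by rw [map_mul, map_mul, ← ha, ← hb, this])
      simpa using congrArg Subtype.val h3
  -- every element of N of order dividing 3 lies in Q
  have hD : ∀ n ∈ N, n ^ 3 = 1 → n ∈ (Q : Subgroup G) := by
    intro n hnN hn3
    set n' : ↥N := ⟨n, hnN⟩ with hn'
    have hn'3 : n' ^ 3 = 1 := Subtype.ext (by simpa using hn3)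
    have hodvd : orderOf n' ∣ 3 := orderOf_dvd_of_pow_eq_one hn'3
    have hpg : IsPGroup 3 (Subgroup.zpowers n') := by
      rcases (Nat.dvd_prime Nat.prime_three).mp hodvd with h | h
      · exact IsPGroup.of_card (by rw [Nat.card_zpowers, h, pow_zero])
      · exact IsPGroup.of_card (by rw [Nat.card_zpowers, h, pow_one])
    obtain ⟨P, hP⟩ := hpg.exists_le_sylow
    haveI hnorm : ((Q.subtype Subgroup.le_normalizer : Sylow 3 ↥N) : Subgroup ↥N).Normal :=
      Subgroup.normal_in_normalizer
    haveI := Sylow.unique_of_normal (Q.subtype Subgroup.le_normalizer) hnorm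
    have hPQ : P = Q.subtype Subgroup.le_normalizer := Subsingleton.elim _ _
    have : n' ∈ (P : Subgroup ↥N) := hP (Subgroup.mem_zpowers n')
    rw [hPQ] at this
    exact this
  -- the subgroup E
  let E : Subgroup G :=
    { carrier := {x : G | x ∈ N ∧ x ^ 2 = 1}
      one_mem' := ⟨one_mem N, one_pow 2⟩
      mul_mem' := by
        rintro x y ⟨hxN, hx2⟩ ⟨hyN, hy2⟩
        refine ⟨mul_mem hxN hyN, ?_⟩
        have hc : Commute x y := hB x y hx2 hy2
        rw [hc.mul_pow, hx2, hy2, one_mul]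
      inv_mem' := by
        rintro x ⟨hxN, hx2⟩
        exact ⟨inv_mem hxN, by rw [inv_pow, hx2, inv_one]⟩ }
  have hEmem : ∀ x : G, x ∈ E ↔ x ∈ N ∧ x ^ 2 = 1 := fun x => Iff.rfl
  have main : (∀ x ∈ N, orderOf x ≠ 4) →
      ∃ E : Subgroup G, (∀ x ∈ E, x ^ 2 = 1) ∧
        E ≤ Subgroup.normalizer ((Q : Subgroup G) : Set G) ∧ (Q : Subgroup G) ⊓ E = ⊥ ∧
        (∀ q ∈ (Q : Subgroup G), ∀ e ∈ E, q * e = e * q) ∧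
        (Q : Subgroup G) ⊔ E = Subgroup.normalizer ((Q : Subgroup G) : Set G) := by
    intro hN4
    refine ⟨E, fun x hx => ((hEmem x).mp hx).2, fun x hx => ((hEmem x).mp hx).1, ?_, ?_, ?_⟩
    · -- Q ⊓ E = ⊥
      rw [eq_bot_iff]
      intro x hx
      obtain ⟨hxQ, hxN, hx2⟩ : x ∈ (Q : Subgroup G) ∧ x ∈ N ∧ x ^ 2 = 1 :=
        ⟨hx.1, (hEmem x).mp hx.2⟩
      have hx3 : x ^ 3 = 1 := hQ3 x hxQ
      have : x = 1 := by
        calc x = x ^ 3 * (x ^ 2)⁻¹ := by group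
        _ = 1 := by rw [hx3, hx2, inv_one, mul_one]
      simp [this]
    · -- commuting
      intro q hq e he
      obtain ⟨heN, he2⟩ := (hEmem e).mp he
      exact (hC e heN he2 q hq).symm
    · -- sup
      refine le_antisymm (sup_le Subgroup.le_normalizer (fun x hx => ((hEmem x).mp hx).1)) ?_
      intro n hnN
      rcases hkey n with h4 | h6
      · have hd4 : orderOf n ∣ 2 ^ 2 := orderOf_dvd_of_pow_eq_one (by norm_num at h4 ⊢; exact h4)
        obtain ⟨i, hi, hoi⟩ := (Nat.dvd_prime_pow Nat.prime_two).mp hd4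
        have hi1 : i ≤ 1 := by
          rcases Nat.lt_or_ge i 2 with h | h
          · omega
          · exfalso
            have : i = 2 := le_antisymm hi h
            exact hN4 n hnN (by rw [hoi, this]; norm_num)
        have hn2 : n ^ 2 = 1 := by
          rw [← orderOf_dvd_iff_pow_eq_one, hoi]
          calc (2:ℕ) ^ i ∣ 2 ^ 1 := pow_dvd_pow 2 hi1
          _ = 2 := by norm_num
        exact Subgroup.mem_sup_right ((hEmem n).mpr ⟨hnN, hn2⟩)
      · have ha : n ^ 4 ∈ (Q : Subgroup G) := by
          refine hD _ (pow_mem hnN 4) ?_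
          rw [← pow_mul]
          calc n ^ (4 * 3) = (n ^ 6) ^ 2 := by rw [← pow_mul]
          _ = 1 := by rw [h6, one_pow]
        have hb : n ^ 3 ∈ E := (hEmem _).mpr ⟨pow_mem hnN 3, by rw [← pow_mul]; exact h6⟩
        have hn : n ^ 4 * n ^ 3 = n := by
          rw [← pow_add, show (4 + 3 : ℕ) = 6 + 1 by norm_num, pow_succ, h6, one_mul]
        rw [← hn]
        exact mul_mem (Subgroup.mem_sup_left ha) (Subgroup.mem_sup_right hb)
  constructor
  · exact main
  · intro hnab
    refine main ?_
    intro x hxN hx4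
    exfalso
    apply hnab
    have hx4' : x ^ 4 = 1 := by rw [← hx4]; exact pow_orderOf_eq_one x
    have hx2sq : (x ^ 2) ^ 2 = 1 := by rw [← pow_mul]; exact hx4'
    have hx2ne : x ^ 2 ≠ 1 := by
      intro h
      have := orderOf_dvd_of_pow_eq_one h
      rw [hx4] at this
      norm_num at this
    have ho2 : orderOf (x ^ 2) = 2 := orderOf_eq_prime hx2sq hx2ne
    -- conjugation by x inverts Q
    have hinv : ∀ q ∈ (Q : Subgroup G), x⁻¹ * q * x = q⁻¹ := by
      intro q hq
      have hcQ : (x⁻¹ * q * x) * q ∈ (Q : Subgroup G) := by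
        refine mul_mem ?_ hq
        have := ((Subgroup.mem_normalizer_iff.mp (inv_mem hxN)) q).mp hq
        simpa using this
      by_cases hc1 : (x⁻¹ * q * x) * q = 1
      · exact eq_inv_of_mul_eq_one_left hc1
      exfalso
      set c := (x⁻¹ * q * x) * q with hcdef
      have hc3 : c ^ 3 = 1 := hQ3 c hcQ
      have hoc : orderOf c = 3 := orderOf_eq_prime hc3 hc1
      have hcomm : Commute (x ^ 2) c := hC (x ^ 2) (pow_mem hxN 2) hx2sq c hcQ
      have h6 : orderOf (x ^ 2 * c) = 6 := by
        rw [hcomm.orderOf_mul_eq_mul_orderOf_of_coprime (by rw [ho2, hoc]; decide)]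
        rw [ho2, hoc]
      have hsq : (x * q) ^ 2 = x ^ 2 * c := by rw [hcdef, pow_two]; group
      have h6' : orderOf ((x * q) ^ 2) = 6 := by rw [hsq]; exact h6
      have hdvd : orderOf ((x * q) ^ 2) ∣ orderOf (x * q) := orderOf_pow_dvd 2
      rcases hkey (x * q) with h4 | hh6
      · have hd : orderOf (x * q) ∣ 4 := orderOf_dvd_of_pow_eq_one h4
        have : (6:ℕ) ∣ 4 := h6' ▸ hdvd.trans hd
        norm_num at this
      · have hd6 : orderOf (x * q) ∣ 6 := orderOf_dvd_of_pow_eq_one hh6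
        have he6 : orderOf (x * q) = 6 := Nat.dvd_antisymm hd6 (h6' ▸ hdvd)
        have : orderOf ((x * q) ^ 2) = 3 := by
          rw [orderOf_pow' (x * q) (two_ne_zero), he6]
          decide
        rw [h6'] at this
        norm_num at this
    intro a b
    have h1 := hinv (a : G) a.2
    have h2' := hinv (b : G) b.2
    have h3 := hinv ((a : G) * b) (mul_mem a.2 b.2)
    have hkey2 : (b : G)⁻¹ * (a : G)⁻¹ = (a : G)⁻¹ * (b : G)⁻¹ := by
      rw [← mul_inv_rev, ← h3, ← h1, ← h2']
      group
    have : (a : G) * b = (b : G) * a := by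
      have := congrArg (fun z => z⁻¹) hkey2
      simpa [mul_inv_rev] using this
    exact Subtype.ext this
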